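/- Let E be a real inner product space, F a real normed vector space, and A : E → F a continuous linear map. Let U and V be linear subspaces of E and λ₁ > λ₂ real numbers such that ‖A u‖ ≤ (exp λ₂)·‖u‖ for every u ∈ U and ‖A v‖ ≥ (exp λ₁)·‖v‖ for every v ∈ V. Then for every nonzero u ∈ U and every nonzero v ∈ V one has ∠(u, v) ≥ (exp λ₁ − exp λ₂)/‖A‖. -/

import Mathlib

/-- (Linear-algebra content of the paper's angle lemma.)
If `‖A u‖ ≤ e^{λ₂}‖u‖` on the subspace `U` and `‖A v‖ ≥ e^{λ₁}‖v‖` on the subspace `V`,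
with `λ₁ > λ₂`, then the angle between any nonzero `u ∈ U` and `v ∈ V` is at least
`(e^{λ₁} − e^{λ₂})/‖A‖`. -/
theorem stmt_1 {E F : Type*} [NormedAddCommGroup E] [InnerProductSpace ℝ E]
    [NormedAddCommGroup F] [NormedSpace ℝ F]
    (A : E →L[ℝ] F) (U V : Submodule ℝ E) (lam₁ lam₂ : ℝ) (hlam : lam₂ < lam₁)
    (hU : ∀ u ∈ U, ‖A u‖ ≤ Real.exp lam₂ * ‖u‖)
    (hV : ∀ v ∈ V, Real.exp lam₁ * ‖v‖ ≤ ‖A v‖) :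
    ∀ u ∈ U, u ≠ 0 → ∀ v ∈ V, v ≠ 0 →
      (Real.exp lam₁ - Real.exp lam₂) / ‖A‖ ≤ InnerProductGeometry.angle u v := by
  intro u hu hu0 v hv hv0
  set u' : E := ‖u‖⁻¹ • u with hu'
  set v' : E := ‖v‖⁻¹ • v with hv'
  have hnu : ‖u‖ ≠ 0 := norm_ne_zero_iff.mpr hu0
  have hnv : ‖v‖ ≠ 0 := norm_ne_zero_iff.mpr hv0
  have hnu' : ‖u'‖ = 1 := by
    rw [hu', norm_smul, norm_inv, norm_norm, inv_mul_cancel₀ hnu]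
  have hnv' : ‖v'‖ = 1 := by
    rw [hv', norm_smul, norm_inv, norm_norm, inv_mul_cancel₀ hnv]
  have hangle : InnerProductGeometry.angle u v = InnerProductGeometry.angle u' v' := by
    rw [hu', hv', InnerProductGeometry.angle_smul_left_of_pos,
      InnerProductGeometry.angle_smul_right_of_pos]
    · exact inv_pos.mpr ((norm_pos_iff).mpr hv0)
    · exact inv_pos.mpr ((norm_pos_iff).mpr hu0)
  set θ := InnerProductGeometry.angle u' v' with hθ
  have hθ0 : 0 ≤ θ := InnerProductGeometry.angle_nonneg _ _
  -- ‖A‖ bound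
  have hAu' : ‖A u'‖ ≤ Real.exp lam₂ := by
    have := hU u' (U.smul_mem _ hu)
    rwa [hnu', mul_one] at this
  have hAv' : Real.exp lam₁ ≤ ‖A v'‖ := by
    have := hV v' (V.smul_mem _ hv)
    rwa [hnv', mul_one] at this
  have hApos : 0 < ‖A‖ := by
    have h1 : Real.exp lam₁ ≤ ‖A v'‖ := hAv'
    have h2 : ‖A v'‖ ≤ ‖A‖ * ‖v'‖ := A.le_opNorm v'
    rw [hnv', mul_one] at h2
    linarith [Real.exp_pos lam₁]
  -- chord lower bound
  have hchord : Real.exp lam₁ - Real.exp lam₂ ≤ ‖A‖ * ‖v' - u'‖ := by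
    have h1 : ‖A v' - A u'‖ ≤ ‖A‖ * ‖v' - u'‖ := by
      have := A.le_opNorm (v' - u')
      rwa [map_sub] at this
    have h2 : ‖A v'‖ - ‖A u'‖ ≤ ‖A v' - A u'‖ := norm_sub_norm_le _ _
    linarith
  -- chord ≤ angle
  have hcos : Real.cos θ = (inner ℝ u' v' : ℝ) := by
    rw [hθ, InnerProductGeometry.cos_angle, hnu', hnv']
    simp
  have hsq : ‖v' - u'‖ ^ 2 = 2 - 2 * Real.cos θ := by
    rw [hcos]
    have := @norm_sub_sq_real E _ _ v' u'
    rw [hnu', hnv'] at this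
    rw [this, real_inner_comm]
    ring
  have hcosge : 1 - θ ^ 2 / 2 ≤ Real.cos θ := Real.one_sub_sq_div_two_le_cos
  have hle : ‖v' - u'‖ ≤ θ := by
    nlinarith [norm_nonneg (v' - u')]
  rw [hangle, div_le_iff₀ hApos]
  nlinarith
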